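/- Let (U,Θ,ρ) be a probability space, N ∈ ℕ, Σ a symmetric positive definite N×N real matrix, and let G : U → ℝ^N be a measurable map with |G(z)| ≤ M for all z ∈ U, for some constant M. For δ ∈ ℝ^N define Φ(z,δ) = (1/2)⟨Σ^{-1}(δ − G(z)), δ − G(z)⟩, Z(δ) = ∫_U exp(−Φ(z,δ)) dρ(z), and let μ^δ be the probability measure with density dμ^δ/dρ = exp(−Φ(·,δ))/Z(δ). Then for every r > 0 there is a constant c(r), depending only on r, M and Σ, such that for all δ, δ' ∈ ℝ^N with |δ| ≤ r and |δ'| ≤ r, d_Hell(μ^δ, μ^{δ'}) ≤ c(r) |δ − δ'|. -/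

import Mathlib

open MeasureTheory Real Filter Matrix

/-- Euclidean norm on `ℝ^N`. -/
noncomputable def euclNorm {N : ℕ} (v : Fin N → ℝ) : ℝ := Real.sqrt (v ⬝ᵥ v)

/-- Least-squares potential `Φ(z) = ½ ⟨Σ⁻¹(δ - G z), δ - G z⟩`. -/
noncomputable def potential {U : Type*} {N : ℕ} (S : Matrix (Fin N) (Fin N) ℝ)
    (δ : Fin N → ℝ) (G : U → Fin N → ℝ) (z : U) : ℝ :=
  1 / 2 * ((S⁻¹).mulVec (δ - G z) ⬝ᵥ (δ - G z))

/-- Hellinger distance between two measures, absolutely continuous with respect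
to `ρ`, given by their densities `f, g`. -/
noncomputable def hellingerDist {U : Type*} [MeasurableSpace U] (ρ : Measure U)
    (f g : U → ℝ) : ℝ :=
  Real.sqrt (1 / 2 * ∫ z, (Real.sqrt (f z) - Real.sqrt (g z)) ^ 2 ∂ρ)

/-- Gibbs density `exp(-Φ)/Z` with `Z = ∫ exp(-Φ) dρ`. -/
noncomputable def gibbsDensity {U : Type*} [MeasurableSpace U] (ρ : Measure U)
    (Φ : U → ℝ) (z : U) : ℝ :=
  Real.exp (-Φ z) / ∫ w, Real.exp (-Φ w) ∂ρ

lemma euclNorm_eq_norm {N : ℕ} (v : Fin N → ℝ) :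
    euclNorm v = ‖(WithLp.equiv 2 (Fin N → ℝ)).symm v‖ := by
  rw [EuclideanSpace.norm_eq, euclNorm]
  congr 1
  simp [dotProduct, Real.norm_eq_abs, sq_abs, sq]

lemma euclNorm_nonneg {N : ℕ} (v : Fin N → ℝ) : 0 ≤ euclNorm v := Real.sqrt_nonneg _

lemma abs_apply_le_euclNorm {N : ℕ} (v : Fin N → ℝ) (i : Fin N) : |v i| ≤ euclNorm v := by
  rw [euclNorm, ← Real.sqrt_sq_eq_abs]
  apply Real.sqrt_le_sqrt
  rw [sq]
  exact Finset.single_le_sum (f := fun j => v j * v j) (fun j _ => mul_self_nonneg _)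
    (Finset.mem_univ i)

lemma euclNorm_sub_le {N : ℕ} (a b : Fin N → ℝ) :
    euclNorm (a - b) ≤ euclNorm a + euclNorm b := by
  simp only [euclNorm_eq_norm]
  rw [show (WithLp.equiv 2 (Fin N → ℝ)).symm (a - b)
      = (WithLp.equiv 2 (Fin N → ℝ)).symm a - (WithLp.equiv 2 (Fin N → ℝ)).symm b from rfl]
  exact norm_sub_le _ _

lemma dot_bound {N : ℕ} (A : Matrix (Fin N) (Fin N) ℝ) (w v : Fin N → ℝ) :
    |A.mulVec w ⬝ᵥ v| ≤ (∑ i, ∑ j, |A i j|) * (euclNorm w * euclNorm v) := by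
  rw [dotProduct]
  calc |∑ i, A.mulVec w i * v i| ≤ ∑ i, |A.mulVec w i * v i| := Finset.abs_sum_le_sum_abs _ _
    _ ≤ ∑ i, ∑ j, |A i j| * (euclNorm w * euclNorm v) := by
        apply Finset.sum_le_sum
        intro i _
        rw [Matrix.mulVec, dotProduct, Finset.sum_mul]
        calc |∑ j, A i j * w j * v i| ≤ ∑ j, |A i j * w j * v i| := Finset.abs_sum_le_sum_abs _ _
          _ ≤ ∑ j, |A i j| * (euclNorm w * euclNorm v) := by
              apply Finset.sum_le_sum
              intro j _
              rw [abs_mul, abs_mul, mul_assoc]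
              exact mul_le_mul_of_nonneg_left
                (mul_le_mul (abs_apply_le_euclNorm w j) (abs_apply_le_euclNorm v i)
                  (abs_nonneg _) (euclNorm_nonneg _)) (abs_nonneg _)
    _ = (∑ i, ∑ j, |A i j|) * (euclNorm w * euclNorm v) := by
        rw [Finset.sum_mul]
        exact Finset.sum_congr rfl fun i _ => (Finset.sum_mul _ _ _).symm

lemma sqrt_exp' (x : ℝ) : Real.sqrt (Real.exp x) = Real.exp (x/2) := by
  rw [show Real.exp x = Real.exp (x/2) * Real.exp (x/2) by rw [← Real.exp_add]; ring_nf,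
    Real.sqrt_mul_self (Real.exp_nonneg _)]

lemma exp_neg_lipschitz' {a b : ℝ} (ha : 0 ≤ a) (hb : 0 ≤ b) :
    |Real.exp (-a) - Real.exp (-b)| ≤ |a - b| := by
  wlog h : b ≤ a generalizing a b
  · rw [abs_sub_comm, abs_sub_comm a b]; exact this hb ha (le_of_not_ge h)
  rw [abs_of_nonpos (by simp [Real.exp_le_exp]; linarith), abs_of_nonneg (by linarith)]
  have h1 : Real.exp (-b) - Real.exp (-a) = Real.exp (-b) * (1 - Real.exp (b - a)) := by
    rw [mul_sub, mul_one, ← Real.exp_add]; ring_nf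
  rw [neg_sub, h1]
  have h2 : 1 - Real.exp (b - a) ≤ a - b := by
    have := Real.add_one_le_exp (b - a); linarith
  have h3 : Real.exp (-b) ≤ 1 := Real.exp_le_one_iff.mpr (by linarith)
  calc Real.exp (-b) * (1 - Real.exp (b - a)) ≤ 1 * (a - b) := by
        apply mul_le_mul h3 h2 ?_ zero_le_one
        have := Real.exp_le_one_iff.mpr (show b - a ≤ 0 by linarith); linarith
    _ = a - b := one_mul _

lemma ratio_diff_bound {p p' Z Z' m e1 e2 : ℝ} (hp : 0 ≤ p) (hp' : 0 ≤ p')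
    (hZ : Real.exp (-m) ≤ Z) (hZ' : Real.exp (-m) ≤ Z')
    (h1 : |p - p'| ≤ e1) (h2 : |Z - Z'| ≤ e2) :
    |Real.exp (-p) / Real.sqrt Z - Real.exp (-p') / Real.sqrt Z'|
      ≤ Real.exp (m/2) * e1 + Real.exp (3*m/2) / 2 * e2 := by
  have he1 : 0 ≤ e1 := le_trans (abs_nonneg _) h1
  have he2 : 0 ≤ e2 := le_trans (abs_nonneg _) h2
  have hZ0 : (0:ℝ) < Z := lt_of_lt_of_le (Real.exp_pos _) hZ
  have hZ'0 : (0:ℝ) < Z' := lt_of_lt_of_le (Real.exp_pos _) hZ'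
  set s := Real.sqrt Z with hsdef
  set t := Real.sqrt Z' with htdef
  have hs : Real.exp (-(m/2)) ≤ s := by
    rw [hsdef, show (-(m/2)) = (-m)/2 by ring, ← sqrt_exp']
    exact Real.sqrt_le_sqrt hZ
  have ht : Real.exp (-(m/2)) ≤ t := by
    rw [htdef, show (-(m/2)) = (-m)/2 by ring, ← sqrt_exp']
    exact Real.sqrt_le_sqrt hZ'
  have hs0 : (0:ℝ) < s := lt_of_lt_of_le (Real.exp_pos _) hs
  have ht0 : (0:ℝ) < t := lt_of_lt_of_le (Real.exp_pos _) ht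
  have hss : s * s = Z := Real.mul_self_sqrt hZ0.le
  have htt : t * t = Z' := Real.mul_self_sqrt hZ'0.le
  have hts : |t - s| * (t + s) = |Z' - Z| := by
    rw [← abs_of_pos (show (0:ℝ) < t + s by positivity), ← abs_mul]
    congr 1
    rw [← hss, ← htt]; ring
  have hd : |t - s| ≤ e2 / (t + s) := by
    rw [le_div_iff₀ (by positivity)]
    rw [hts, abs_sub_comm]
    exact h2
  have hd2 : |t - s| ≤ e2 * Real.exp (m/2) / 2 := by
    refine hd.trans ?_
    rw [div_le_div_iff₀ (by positivity) two_pos]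
    have hexp : Real.exp (-(m/2)) * Real.exp (m/2) = 1 := by
      rw [← Real.exp_add]; simp
    nlinarith [Real.exp_pos (m/2), mul_le_mul_of_nonneg_right hs (Real.exp_pos (m/2)).le,
      mul_le_mul_of_nonneg_right ht (Real.exp_pos (m/2)).le]
  have key : Real.exp (-p)/s - Real.exp (-p')/t
      = (Real.exp (-p) - Real.exp (-p'))/s + Real.exp (-p') * (t - s)/(s*t) := by
    field_simp
    ring
  rw [key]
  have hinv_s : 1/s ≤ Real.exp (m/2) := by
    rw [div_le_iff₀ hs0]
    have hexp : Real.exp (m/2) * Real.exp (-(m/2)) = 1 := by rw [← Real.exp_add]; simp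
    nlinarith [mul_le_mul_of_nonneg_left hs (Real.exp_pos (m/2)).le]
  have hinv_st : 1/(s*t) ≤ Real.exp m := by
    rw [div_le_iff₀ (by positivity)]
    have hexp : Real.exp m * (Real.exp (-(m/2)) * Real.exp (-(m/2))) = 1 := by
      rw [← Real.exp_add, ← Real.exp_add]; ring_nf; simp
    nlinarith [mul_le_mul (mul_le_mul_of_nonneg_left hs (Real.exp_pos m).le) ht
      (Real.exp_pos (-(m/2))).le (by positivity : (0:ℝ) ≤ Real.exp m * s)]
  calc |(Real.exp (-p) - Real.exp (-p'))/s + Real.exp (-p') * (t - s)/(s*t)|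
      ≤ |(Real.exp (-p) - Real.exp (-p'))/s| + |Real.exp (-p') * (t - s)/(s*t)| := abs_add_le _ _
    _ = |Real.exp (-p) - Real.exp (-p')| * (1/s)
        + Real.exp (-p') * |t - s| * (1/(s*t)) := by
        rw [abs_div, abs_div, abs_mul, abs_of_pos hs0, abs_of_pos (show (0:ℝ) < s*t by positivity),
          abs_of_pos (Real.exp_pos (-p'))]
        ring
    _ ≤ e1 * Real.exp (m/2) + (1 * (e2 * Real.exp (m/2) / 2)) * Real.exp m := by
        gcongr
        · exact le_trans (exp_neg_lipschitz' hp hp') h1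
        · exact Real.exp_le_one_iff.mpr (by linarith)
    _ = Real.exp (m/2) * e1 + Real.exp (3*m/2) / 2 * e2 := by
        rw [show (3*m/2) = m/2 + m by ring, Real.exp_add]
        ring


set_option maxHeartbeats 1000000 in
/-- Well-posedness (local Lipschitz continuity in the data `δ`, in the
Hellinger distance) of the Bayesian posterior for a uniformly bounded forward
map (uniform-prior setting). -/
theorem posterior_locally_lipschitz_bounded_forward
    {U : Type*} [MeasurableSpace U] (ρ : Measure U) [IsProbabilityMeasure ρ]
    {N : ℕ} (S : Matrix (Fin N) (Fin N) ℝ) (hS : S.PosDef)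
    (G : U → Fin N → ℝ) (hGmeas : Measurable G)
    (M : ℝ) (hbound : ∀ z, euclNorm (G z) ≤ M) :
    ∀ r > 0, ∃ c : ℝ, ∀ δ δ' : Fin N → ℝ, euclNorm δ ≤ r → euclNorm δ' ≤ r →
      hellingerDist ρ (gibbsDensity ρ (potential S δ G))
          (gibbsDensity ρ (potential S δ' G))
        ≤ c * euclNorm (δ - δ') := by
  intro r hr
  have hU : Nonempty U := by
    by_contra h
    have h1 : (ρ Set.univ) = 1 := measure_univ
    rw [Set.univ_eq_empty_iff.mpr (not_nonempty_iff.mp h)] at h1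
    simp at h1
  obtain ⟨z₀⟩ := hU
  have hM0 : (0:ℝ) ≤ M := le_trans (euclNorm_nonneg _) (hbound z₀)
  have hA : (S⁻¹).PosDef := hS.inv
  set K : ℝ := ∑ i, ∑ j, |S⁻¹ i j| with hKdef
  have hK0 : 0 ≤ K := Finset.sum_nonneg fun i _ => Finset.sum_nonneg fun j _ => abs_nonneg _
  set R : ℝ := r + M with hRdef
  have hR0 : (0:ℝ) ≤ R := by rw [hRdef]; linarith
  set B : ℝ := 1/2 * (K * (R * R)) with hBdef
  have hB0 : (0:ℝ) ≤ B := by rw [hBdef]; positivity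
  set L : ℝ := K * R with hLdef
  have hL0 : (0:ℝ) ≤ L := mul_nonneg hK0 hR0
  -- norm bound on δ - G z
  have hnormu : ∀ (δ : Fin N → ℝ), euclNorm δ ≤ r → ∀ z, euclNorm (δ - G z) ≤ R := by
    intro δ hδ z
    exact (euclNorm_sub_le δ (G z)).trans (add_le_add hδ (hbound z))
  -- nonnegativity of the potential
  have hpot_nonneg : ∀ (δ : Fin N → ℝ) z, 0 ≤ potential S δ G z := by
    intro δ z
    have h := hA.posSemidef.dotProduct_mulVec_nonneg (δ - G z)
    simp only [star_trivial] at h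
    rw [dotProduct_comm] at h
    rw [potential]
    linarith
  -- upper bound on the potential
  have hpot_le : ∀ (δ : Fin N → ℝ), euclNorm δ ≤ r → ∀ z, potential S δ G z ≤ B := by
    intro δ hδ z
    have h := dot_bound S⁻¹ (δ - G z) (δ - G z)
    have hu := hnormu δ hδ z
    have h2 : (S⁻¹).mulVec (δ - G z) ⬝ᵥ (δ - G z) ≤ K * (R * R) := by
      refine le_trans (le_abs_self _) (h.trans ?_)
      exact mul_le_mul_of_nonneg_left
        (mul_le_mul hu hu (euclNorm_nonneg _) hR0) hK0
    rw [potential, hBdef]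
    linarith
  -- Lipschitz bound on the potential
  have hlip : ∀ (δ δ' : Fin N → ℝ), euclNorm δ ≤ r → euclNorm δ' ≤ r → ∀ z,
      |potential S δ G z - potential S δ' G z| ≤ L * euclNorm (δ - δ') := by
    intro δ δ' hδ hδ' z
    have h1 : (δ - G z) - (δ' - G z) = δ - δ' := by
      funext i; simp
    have hbilin : (S⁻¹).mulVec (δ - G z) ⬝ᵥ (δ - G z) - (S⁻¹).mulVec (δ' - G z) ⬝ᵥ (δ' - G z)
        = (S⁻¹).mulVec ((δ - G z) - (δ' - G z)) ⬝ᵥ (δ - G z)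
          + (S⁻¹).mulVec (δ' - G z) ⬝ᵥ ((δ - G z) - (δ' - G z)) := by
      simp only [Matrix.mulVec_sub, sub_dotProduct, dotProduct_sub]
      ring
    rw [h1] at hbilin
    have hdiff : potential S δ G z - potential S δ' G z
        = 1/2 * ((S⁻¹).mulVec (δ - δ') ⬝ᵥ (δ - G z)
            + (S⁻¹).mulVec (δ' - G z) ⬝ᵥ (δ - δ')) := by
      rw [potential, potential]
      linarith
    rw [hdiff]
    have b1 := dot_bound S⁻¹ (δ - δ') (δ - G z)
    have b2 := dot_bound S⁻¹ (δ' - G z) (δ - δ')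
    have c1 : K * (euclNorm (δ - δ') * euclNorm (δ - G z))
        ≤ K * (euclNorm (δ - δ') * R) := by
      exact mul_le_mul_of_nonneg_left
        (mul_le_mul_of_nonneg_left (hnormu δ hδ z) (euclNorm_nonneg _)) hK0
    have c2 : K * (euclNorm (δ' - G z) * euclNorm (δ - δ'))
        ≤ K * (R * euclNorm (δ - δ')) := by
      exact mul_le_mul_of_nonneg_left
        (mul_le_mul_of_nonneg_right (hnormu δ' hδ' z) (euclNorm_nonneg _)) hK0
    rw [abs_mul, abs_of_pos (by norm_num : (0:ℝ) < 1/2)]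
    have habs := abs_add_le ((S⁻¹).mulVec (δ - δ') ⬝ᵥ (δ - G z))
      ((S⁻¹).mulVec (δ' - G z) ⬝ᵥ (δ - δ'))
    rw [hLdef]
    nlinarith [abs_nonneg ((S⁻¹).mulVec (δ - δ') ⬝ᵥ (δ - G z))]
  -- measurability
  have hmeasP : ∀ δ : Fin N → ℝ, Measurable (potential S δ G) := by
    intro δ
    have heq : potential S δ G
        = fun z => 1/2 * (∑ i, (∑ j, S⁻¹ i j * (δ j - G z j)) * (δ i - G z i)) := by
      funext z
      simp [potential, Matrix.mulVec, dotProduct, Pi.sub_apply]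
    rw [heq]
    apply Measurable.const_mul
    apply Finset.measurable_sum
    intro i _
    apply Measurable.mul
    · apply Finset.measurable_sum
      intro j _
      exact measurable_const.mul (measurable_const.sub ((measurable_pi_apply j).comp hGmeas))
    · exact measurable_const.sub ((measurable_pi_apply i).comp hGmeas)
  have hmeas : ∀ δ : Fin N → ℝ, Measurable (fun z => Real.exp (-(potential S δ G z))) :=
    fun δ => Real.measurable_exp.comp (hmeasP δ).neg
  -- integrability
  have hint : ∀ δ : Fin N → ℝ, Integrable (fun z => Real.exp (-(potential S δ G z))) ρ := by
    intro δ
    refine Integrable.mono' (integrable_const 1) ((hmeas δ).aestronglyMeasurable)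
      (Eventually.of_forall fun z => ?_)
    rw [Real.norm_eq_abs, abs_of_pos (Real.exp_pos _)]
    exact Real.exp_le_one_iff.mpr (neg_nonpos.mpr (hpot_nonneg δ z))
  -- lower bound on Z
  have hZlb : ∀ δ : Fin N → ℝ, euclNorm δ ≤ r →
      Real.exp (-B) ≤ ∫ z, Real.exp (-(potential S δ G z)) ∂ρ := by
    intro δ hδ
    have hconst : Real.exp (-B) = ∫ _z, Real.exp (-B) ∂ρ := by simp
    rw [hconst]
    exact integral_mono (integrable_const _) (hint δ)
      (fun z => Real.exp_le_exp.mpr (by linarith [hpot_le δ hδ z]))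
  -- Lipschitz bound on Z
  have hZdiff : ∀ δ δ' : Fin N → ℝ, euclNorm δ ≤ r → euclNorm δ' ≤ r →
      |(∫ z, Real.exp (-(potential S δ G z)) ∂ρ)
        - ∫ z, Real.exp (-(potential S δ' G z)) ∂ρ| ≤ L * euclNorm (δ - δ') := by
    intro δ δ' hδ hδ'
    rw [← integral_sub (hint δ) (hint δ')]
    calc |∫ z, (Real.exp (-(potential S δ G z)) - Real.exp (-(potential S δ' G z))) ∂ρ|
        ≤ ∫ z, |Real.exp (-(potential S δ G z)) - Real.exp (-(potential S δ' G z))| ∂ρ := by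
          rw [← Real.norm_eq_abs]
          refine (norm_integral_le_integral_norm _).trans (le_of_eq ?_)
          simp [Real.norm_eq_abs]
      _ ≤ L * euclNorm (δ - δ') := by
          have hconst : L * euclNorm (δ - δ') = ∫ _z, L * euclNorm (δ - δ') ∂ρ := by simp
          rw [hconst]
          refine integral_mono_of_nonneg (Eventually.of_forall fun z => abs_nonneg _)
            (integrable_const _) (Eventually.of_forall fun z => ?_)
          exact le_trans (exp_neg_lipschitz' (hpot_nonneg δ z) (hpot_nonneg δ' z))
            (hlip δ δ' hδ hδ' z)
  -- the constant
  refine ⟨Real.exp (B/2) * L / 2 + Real.exp (3*B/2) * L / 2, ?_⟩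
  intro δ δ' hδ hδ'
  set d := euclNorm (δ - δ') with hddef
  have hd0 : 0 ≤ d := euclNorm_nonneg _
  set Z := ∫ z, Real.exp (-(potential S δ G z)) ∂ρ with hZdef
  set Z' := ∫ z, Real.exp (-(potential S δ' G z)) ∂ρ with hZ'def
  set c : ℝ := Real.exp (B/2) * L / 2 + Real.exp (3*B/2) * L / 2 with hcdef
  have hc0 : 0 ≤ c := by rw [hcdef]; positivity
  -- sqrt of gibbs density
  have hsq : ∀ (η : Fin N → ℝ) z, Real.sqrt (gibbsDensity ρ (potential S η G) z)
      = Real.exp (-(potential S η G z / 2))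
        / Real.sqrt (∫ w, Real.exp (-(potential S η G w)) ∂ρ) := by
    intro η z
    rw [gibbsDensity, Real.sqrt_div (Real.exp_nonneg _), sqrt_exp', neg_div]
  -- pointwise bound
  have hpt : ∀ z, |Real.sqrt (gibbsDensity ρ (potential S δ G) z)
      - Real.sqrt (gibbsDensity ρ (potential S δ' G) z)| ≤ c * d := by
    intro z
    rw [hsq δ z, hsq δ' z]
    have hb := ratio_diff_bound (p := potential S δ G z / 2) (p' := potential S δ' G z / 2)
      (Z := Z) (Z' := Z') (m := B) (e1 := L * d / 2) (e2 := L * d)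
      (by linarith [hpot_nonneg δ z]) (by linarith [hpot_nonneg δ' z])
      (hZlb δ hδ) (hZlb δ' hδ')
      (by
        rw [show potential S δ G z / 2 - potential S δ' G z / 2
            = (potential S δ G z - potential S δ' G z) / 2 by ring, abs_div]
        rw [abs_of_pos (by norm_num : (0:ℝ) < 2)]
        have := hlip δ δ' hδ hδ' z
        linarith)
      (hZdiff δ δ' hδ hδ')
    refine hb.trans (le_of_eq ?_)
    rw [hcdef]
    ring
  -- integrate the squared pointwise bound
  rw [hellingerDist]
  have hint2 : (∫ z, (Real.sqrt (gibbsDensity ρ (potential S δ G) z)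
      - Real.sqrt (gibbsDensity ρ (potential S δ' G) z)) ^ 2 ∂ρ) ≤ (c*d)^2 := by
    have hconst : (∫ _z : U, (c*d)^2 ∂ρ) = (c*d)^2 := by
      rw [integral_const]
      simp
    rw [← hconst]
    refine integral_mono_of_nonneg (Eventually.of_forall fun z => sq_nonneg _)
      (integrable_const _) (Eventually.of_forall fun z => ?_)
    have := pow_le_pow_left₀ (abs_nonneg _) (hpt z) 2
    rw [sq_abs] at this
    exact this
  have key : ∀ x y : ℝ, 0 ≤ y → x ≤ y^2 → Real.sqrt (1/2*x) ≤ y := by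
    intro x y hy hx
    have h1 : (1:ℝ)/2 * x ≤ y^2 := by linarith [sq_nonneg y]
    exact le_trans (Real.sqrt_le_sqrt h1) (le_of_eq (Real.sqrt_sq hy))
  exact key _ (c*d) (by positivity) hint2
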